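/- arXiv:1112.6044 — 4 statements merged into one kernel-verified Lean document; each statement's English description precedes it below -/
import Mathlib

section
/- Let (X, Σ, μ) be an atomless finite measure space and E a Banach space. If f ∈ L¹(μ, E) is Bochner integrable, then the norm-closure of the set {∫_B f dμ : B ∈ Σ} is a convex subset of E. -/
open MeasureTheory Filter Topology

/-- A finite positive measure is atomless (in the measure-atom sense). -/
def MeasureAtomless {X : Type*} [MeasurableSpace X] (μ : Measure X) : Prop :=
  ∀ A : Set X, MeasurableSet A → μ A ≠ 0 →
    ∃ B ⊆ A, MeasurableSet B ∧ 0 < μ B ∧ μ B < μ A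

lemma uhl_small {X : Type*} [MeasurableSpace X] {μ : Measure X} [IsFiniteMeasure μ]
    (hμ : MeasureAtomless μ) {A : Set X} (hA : MeasurableSet A) (h0 : μ A ≠ 0)
    {δ : ℝ} (hδ : 0 < δ) :
    ∃ B ⊆ A, MeasurableSet B ∧ μ B ≠ 0 ∧ (μ B).toReal ≤ δ := by
  have claim : ∀ n : ℕ, ∃ B ⊆ A, MeasurableSet B ∧ μ B ≠ 0 ∧
      (μ B).toReal ≤ (μ A).toReal / 2 ^ n := by
    intro n
    induction n with
    | zero => exact ⟨A, subset_rfl, hA, h0, by simp⟩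
    | succ n ih =>
      obtain ⟨B, hBA, hBm, hB0, hBle⟩ := ih
      obtain ⟨B', hB'B, hB'm, hB'pos, hB'lt⟩ := hμ B hBm hB0
      have hfin : ∀ s : Set X, μ s ≠ ⊤ := fun s => measure_ne_top μ s
      have hadd : μ B' + μ (B \ B') = μ B := by
        rw [measure_add_diff hB'm.nullMeasurableSet B, Set.union_eq_self_of_subset_left hB'B]
      have haddR : (μ B').toReal + (μ (B \ B')).toReal = (μ B).toReal := by
        rw [← ENNReal.toReal_add (hfin _) (hfin _), hadd]
      have hltR : (μ B').toReal < (μ B).toReal :=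
        ENNReal.toReal_lt_toReal (hfin _) (hfin _) |>.mpr hB'lt
      by_cases hc : (μ B').toReal ≤ (μ B).toReal / 2
      · refine ⟨B', hB'B.trans hBA, hB'm, hB'pos.ne', ?_⟩
        calc (μ B').toReal ≤ (μ B).toReal / 2 := hc
          _ ≤ ((μ A).toReal / 2 ^ n) / 2 := by linarith
          _ = (μ A).toReal / 2 ^ (n + 1) := by ring
      · refine ⟨B \ B', Set.diff_subset.trans hBA, hBm.diff hB'm, ?_, ?_⟩
        · intro h
          rw [h] at haddR
          simp at haddR
          linarith
        · push_neg at hc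
          calc (μ (B \ B')).toReal = (μ B).toReal - (μ B').toReal := by linarith
            _ ≤ (μ B).toReal / 2 := by linarith
            _ ≤ ((μ A).toReal / 2 ^ n) / 2 := by linarith
            _ = (μ A).toReal / 2 ^ (n + 1) := by ring
  obtain ⟨n, hn⟩ := pow_unbounded_of_one_lt ((μ A).toReal / δ) (one_lt_two (α := ℝ))
  obtain ⟨B, hBA, hBm, hB0, hBle⟩ := claim n
  refine ⟨B, hBA, hBm, hB0, hBle.trans ?_⟩
  rw [div_le_iff₀ (by positivity)]
  rw [div_lt_iff₀ hδ] at hn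
  linarith

lemma uhl_sierpinski {X : Type*} [MeasurableSpace X] {μ : Measure X} [IsFiniteMeasure μ]
    (hμ : MeasureAtomless μ)
    {A : Set X} (hA : MeasurableSet A) {c : ℝ} (hc0 : 0 ≤ c) (hcA : c ≤ (μ A).toReal) :
    ∃ C ⊆ A, MeasurableSet C ∧ (μ C).toReal = c := by
  classical
  have hfin : ∀ s : Set X, μ s ≠ ⊤ := fun s => measure_ne_top μ s
  -- the greedy step
  have key : ∀ C : Set X, C ⊆ A → MeasurableSet C → (μ C).toReal ≤ c →
      ∃ C', (C ⊆ C' ∧ C' ⊆ A ∧ MeasurableSet C' ∧ (μ C').toReal ≤ c) ∧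
        ∀ D : Set X, D ⊆ A \ C → MeasurableSet D → (μ C).toReal + (μ D).toReal ≤ c →
          (μ D).toReal ≤ 2 * ((μ C').toReal - (μ C).toReal) := by
    intro C hCA hCm hCc
    set T : Set ℝ := {t | ∃ D : Set X, D ⊆ A \ C ∧ MeasurableSet D ∧
      (μ C).toReal + t ≤ c ∧ t = (μ D).toReal} with hT
    have h0T : (0 : ℝ) ∈ T := ⟨∅, Set.empty_subset _, MeasurableSet.empty, by simpa using hCc,
      by simp⟩
    have hbdd : BddAbove T := by
      refine ⟨(μ A).toReal, ?_⟩
      rintro t ⟨D, hD, hDm, hDc, rfl⟩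
      exact ENNReal.toReal_mono (hfin _) (measure_mono (hD.trans Set.diff_subset))
    set sup := sSup T with hsup
    rcases le_or_gt sup 0 with hs | hs
    · refine ⟨C, ⟨subset_rfl, hCA, hCm, hCc⟩, ?_⟩
      intro D hD hDm hDc
      have : (μ D).toReal ∈ T := ⟨D, hD, hDm, hDc, rfl⟩
      have := le_csSup hbdd this
      simp only [sub_self, mul_zero]
      linarith
    · obtain ⟨t, ht, htgt⟩ := exists_lt_of_lt_csSup ⟨0, h0T⟩ (half_lt_self hs)
      obtain ⟨D, hD, hDm, hDc, rfl⟩ := ht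
      have hdisj : Disjoint C D :=
        Set.disjoint_of_subset_right hD Set.disjoint_sdiff_right
      have hadd : (μ (C ∪ D)).toReal = (μ C).toReal + (μ D).toReal := by
        rw [measure_union hdisj hDm, ENNReal.toReal_add (hfin _) (hfin _)]
      refine ⟨C ∪ D, ⟨Set.subset_union_left, Set.union_subset hCA (hD.trans Set.diff_subset),
        hCm.union hDm, by rw [hadd]; linarith⟩, ?_⟩
      intro D' hD' hD'm hD'c
      have : (μ D').toReal ∈ T := ⟨D', hD', hD'm, hD'c, rfl⟩
      have hle := le_csSup hbdd this
      rw [hadd]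
      linarith
  choose! next hnext hkey using key
  set seq : ℕ → Set X := fun n => next^[n] ∅ with hseqdef
  have hseq_succ : ∀ n, seq (n + 1) = next (seq n) := fun n =>
    Function.iterate_succ_apply' next n ∅
  have hseq : ∀ n, seq n ⊆ A ∧ MeasurableSet (seq n) ∧ (μ (seq n)).toReal ≤ c := by
    intro n
    induction n with
    | zero => exact ⟨Set.empty_subset _, MeasurableSet.empty, by simpa [hseqdef, Function.iterate_zero_apply] using hc0⟩
    | succ n ih =>
      obtain ⟨h1, h2, h3⟩ := ih
      obtain ⟨hsub, hA', hm', hc'⟩ := hnext (seq n) h1 h2 h3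
      rw [hseq_succ]
      exact ⟨hA', hm', hc'⟩
  have hmono : Monotone seq := by
    apply monotone_nat_of_le_succ
    intro n
    obtain ⟨h1, h2, h3⟩ := hseq n
    rw [hseq_succ]
    exact (hnext (seq n) h1 h2 h3).1
  set Cinf := ⋃ n, seq n with hCinf
  have hCinfA : Cinf ⊆ A := Set.iUnion_subset fun n => (hseq n).1
  have hCinfm : MeasurableSet Cinf := MeasurableSet.iUnion fun n => (hseq n).2.1
  have htend : Tendsto (fun n => (μ (seq n)).toReal) atTop (𝓝 ((μ Cinf).toReal)) :=
    (ENNReal.tendsto_toReal (hfin _)).comp (tendsto_measure_iUnion_atTop hmono)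
  have hle_lim : ∀ n, (μ (seq n)).toReal ≤ (μ Cinf).toReal := fun n =>
    ENNReal.toReal_mono (hfin _) (measure_mono (Set.subset_iUnion seq n))
  have hLc : (μ Cinf).toReal ≤ c :=
    le_of_tendsto htend (Eventually.of_forall fun n => (hseq n).2.2)
  refine ⟨Cinf, hCinfA, hCinfm, le_antisymm hLc ?_⟩
  by_contra hlt
  push_neg at hlt
  -- find a small positive piece inside A \ Cinf
  have hB : ∃ B ⊆ A \ Cinf, MeasurableSet B ∧ μ B ≠ 0 ∧ (μ B).toReal ≤ c - (μ Cinf).toReal := by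
    have hdn : μ (A \ Cinf) ≠ 0 := by
      intro h
      have : μ A ≤ μ Cinf + μ (A \ Cinf) := by
        refine (measure_mono ?_).trans (measure_union_le _ _)
        intro x hx
        by_cases hxc : x ∈ Cinf
        · exact Set.mem_union_left _ hxc
        · exact Set.mem_union_right _ ⟨hx, hxc⟩
      rw [h, add_zero] at this
      have := ENNReal.toReal_mono (hfin _) this
      linarith
    exact uhl_small hμ (hA.diff hCinfm) hdn (by linarith)
  obtain ⟨B, hBsub, hBm, hB0, hBle⟩ := hB
  have hBpos : 0 < (μ B).toReal := ENNReal.toReal_pos hB0 (hfin _)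
  have hstep : ∀ n, (μ B).toReal ≤ 2 * ((μ (seq (n + 1))).toReal - (μ (seq n)).toReal) := by
    intro n
    obtain ⟨h1, h2, h3⟩ := hseq n
    have hBsub' : B ⊆ A \ seq n :=
      hBsub.trans (Set.diff_subset_diff_right (Set.subset_iUnion seq n))
    have hsum : (μ (seq n)).toReal + (μ B).toReal ≤ c := by
      have := hle_lim n
      linarith
    have := hkey (seq n) h1 h2 h3 B hBsub' hBm hsum
    rwa [hseq_succ]
  have hdiff : Tendsto (fun n => 2 * ((μ (seq (n + 1))).toReal - (μ (seq n)).toReal)) atTop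
      (𝓝 (2 * ((μ Cinf).toReal - (μ Cinf).toReal))) := by
    exact (tendsto_const_nhds.mul ((htend.comp (tendsto_add_atTop_nat 1)).sub htend))
  have : (μ B).toReal ≤ 2 * ((μ Cinf).toReal - (μ Cinf).toReal) :=
    ge_of_tendsto' hdiff hstep |>.trans_eq' rfl
  simp at this
  linarith

lemma uhl_approx {X : Type*} [MeasurableSpace X] {μ : Measure X} [IsFiniteMeasure μ]
    (hμ : MeasureAtomless μ)
    {E : Type*} [NormedAddCommGroup E] [NormedSpace ℝ E] [CompleteSpace E]
    {f : X → E} (hf : Integrable f μ) {A : Set X} (hA : MeasurableSet A)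
    {s : ℝ} (hs0 : 0 ≤ s) (hs1 : s ≤ 1) {ε : ℝ} (hε : 0 < ε) :
    ∃ C ⊆ A, MeasurableSet C ∧ ‖(∫ x in C, f x ∂μ) - s • ∫ x in A, f x ∂μ‖ ≤ ε := by
  classical
  have hε3 : 0 < ε / 3 := by linarith
  obtain ⟨g, hg, hgm⟩ := (memLp_one_iff_integrable.2 hf).exists_simpleFunc_eLpNorm_sub_lt
    ENNReal.one_ne_top (ENNReal.ofReal_pos.mpr hε3).ne'
  have hgi : Integrable g μ := memLp_one_iff_integrable.1 hgm
  have hfg : Integrable (fun x => f x - g x) μ := hf.sub hgi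
  have hI : ∫ x, ‖f x - g x‖ ∂μ ≤ ε / 3 := by
    rw [integral_norm_eq_lintegral_enorm hfg.aestronglyMeasurable]
    have : ∫⁻ x, ‖f x - g x‖ₑ ∂μ = eLpNorm (f - ⇑g) 1 μ := by
      rw [eLpNorm_one_eq_lintegral_enorm]; rfl
    rw [this]
    exact ENNReal.toReal_le_of_le_ofReal hε3.le hg.le
  have hbound : ∀ C : Set X, ‖∫ x in C, (f x - g x) ∂μ‖ ≤ ε / 3 := by
    intro C
    refine (norm_integral_le_integral_norm _).trans ?_
    refine (setIntegral_le_integral hfg.norm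
      (Eventually.of_forall fun x => norm_nonneg _)).trans hI
  set Ay : E → Set X := fun y => A ∩ ⇑g ⁻¹' {y} with hAy
  have hAym : ∀ y, MeasurableSet (Ay y) := fun y => hA.inter (g.measurableSet_fiber y)
  have hchoice : ∀ y : E, ∃ C ⊆ Ay y, MeasurableSet C ∧
      (μ C).toReal = s * (μ (Ay y)).toReal := by
    intro y
    refine uhl_sierpinski hμ (hAym y) (mul_nonneg hs0 ENNReal.toReal_nonneg) ?_
    exact mul_le_of_le_one_left ENNReal.toReal_nonneg hs1
  choose Cy hCy1 hCy2 hCy3 using hchoice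
  set C : Set X := ⋃ y ∈ g.range, Cy y with hC
  have hCm : MeasurableSet C := g.range.measurableSet_biUnion fun y _ => hCy2 y
  have hCA : C ⊆ A := Set.iUnion₂_subset fun y _ =>
    (hCy1 y).trans Set.inter_subset_left
  have hAdisj : Set.Pairwise (↑g.range) (Function.onFun Disjoint Ay) := by
    intro y _ z _ hyz
    simp only [Function.onFun, Set.disjoint_left]
    rintro x ⟨_, hx1⟩ ⟨_, hx2⟩
    exact hyz (hx1.symm.trans hx2)
  have hCdisj : Set.Pairwise (↑g.range) (Function.onFun Disjoint Cy) := fun y hy z hz hyz =>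
    (hAdisj hy hz hyz).mono (hCy1 y) (hCy1 z)
  have hAeq : A = ⋃ y ∈ g.range, Ay y := by
    ext x
    simp only [Set.mem_iUnion, hAy, Set.mem_inter_iff, Set.mem_preimage, Set.mem_singleton_iff]
    exact ⟨fun hx => ⟨g x, g.mem_range_self x, hx, rfl⟩, fun ⟨y, _, hx, _⟩ => hx⟩
  have hintA : ∫ x in A, g x ∂μ = ∑ y ∈ g.range, (μ (Ay y)).toReal • y := by
    rw [hAeq, integral_biUnion_finset g.range (fun y _ => hAym y) hAdisj
      (fun y _ => hgi.integrableOn)]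
    refine Finset.sum_congr rfl fun y _ => ?_
    rw [setIntegral_congr_fun (hAym y) (fun x hx => hx.2), setIntegral_const, measureReal_def]
  have hintC : ∫ x in C, g x ∂μ = s • ∫ x in A, g x ∂μ := by
    rw [hC, integral_biUnion_finset g.range (fun y _ => hCy2 y) hCdisj
      (fun y _ => hgi.integrableOn), hintA, Finset.smul_sum]
    refine Finset.sum_congr rfl fun y _ => ?_
    have : Set.EqOn (⇑g) (fun _ => y) (Cy y) := fun x hx => ((hCy1 y) hx).2
    rw [setIntegral_congr_fun (hCy2 y) this, setIntegral_const, measureReal_def, hCy3, mul_smul]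
  refine ⟨C, hCA, hCm, ?_⟩
  have e1 : ∫ x in C, f x ∂μ - s • ∫ x in A, f x ∂μ =
      (∫ x in C, (f x - g x) ∂μ) - s • ∫ x in A, (f x - g x) ∂μ := by
    rw [integral_sub hf.integrableOn hgi.integrableOn,
      integral_sub hf.integrableOn hgi.integrableOn, smul_sub, hintC]
    abel
  rw [e1]
  calc ‖(∫ x in C, (f x - g x) ∂μ) - s • ∫ x in A, (f x - g x) ∂μ‖
      ≤ ‖∫ x in C, (f x - g x) ∂μ‖ + ‖s • ∫ x in A, (f x - g x) ∂μ‖ := norm_sub_le _ _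
    _ ≤ ε / 3 + s * (ε / 3) := by
        refine add_le_add (hbound C) ?_
        rw [norm_smul, Real.norm_eq_abs, abs_of_nonneg hs0]
        exact mul_le_mul_of_nonneg_left (hbound A) hs0
    _ ≤ ε := by nlinarith

/-- Uhl's theorem: for an atomless finite measure and a Bochner integrable `f`,
the closure of the set of integrals of `f` over measurable sets is convex. -/
theorem uhl_convexity {X : Type*} [MeasurableSpace X] (μ : Measure X) [IsFiniteMeasure μ]
    (hμ : MeasureAtomless μ)
    {E : Type*} [NormedAddCommGroup E] [NormedSpace ℝ E] [CompleteSpace E]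
    (f : X → E) (hf : Integrable f μ) :
    Convex ℝ (closure {y : E | ∃ B : Set X, MeasurableSet B ∧ y = ∫ x in B, f x ∂μ}) := by
  set S : Set E := {y : E | ∃ B : Set X, MeasurableSet B ∧ y = ∫ x in B, f x ∂μ} with hS
  intro x hx y hy a b ha hb hab
  have ha1 : a ≤ 1 := by linarith
  have hb1 : b ≤ 1 := by linarith
  -- the core claim: for actual members of S, the combination is in the closure
  have hcore : ∀ x' ∈ S, ∀ y' ∈ S, a • x' + b • y' ∈ closure S := by
    rintro x' ⟨B₁, hB₁, rfl⟩ y' ⟨B₂, hB₂, rfl⟩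
    rw [Metric.mem_closure_iff]
    intro ε hε
    have hε3 : 0 < ε / 3 := by linarith
    set A₀ : Set X := B₁ ∩ B₂ with hA₀
    set A₁ : Set X := B₁ \ B₂ with hA₁
    set A₂ : Set X := B₂ \ B₁ with hA₂
    obtain ⟨C₁, hC₁sub, hC₁m, hC₁⟩ := uhl_approx hμ hf (hB₁.diff hB₂) ha ha1 hε3
    obtain ⟨C₂, hC₂sub, hC₂m, hC₂⟩ := uhl_approx hμ hf (hB₂.diff hB₁) hb hb1 hε3
    have hsplit₁ : ∫ x in B₁, f x ∂μ = (∫ x in A₀, f x ∂μ) + ∫ x in A₁, f x ∂μ :=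
      (integral_inter_add_diff hB₂ hf.integrableOn).symm
    have hsplit₂ : ∫ x in B₂, f x ∂μ = (∫ x in A₀, f x ∂μ) + ∫ x in A₂, f x ∂μ := by
      have := (integral_inter_add_diff hB₁ (hf.integrableOn (s := B₂))).symm
      rwa [Set.inter_comm B₂ B₁] at this
    -- the approximating set
    have hd₁ : Disjoint A₀ C₁ := by
      refine Set.disjoint_of_subset_right hC₁sub ?_
      exact (Set.disjoint_sdiff_right).mono_left Set.inter_subset_right
    have hd₂ : Disjoint A₀ C₂ := by
      refine Set.disjoint_of_subset_right hC₂sub ?_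
      exact (Set.disjoint_sdiff_right).mono_left Set.inter_subset_left
    have hd₁₂ : Disjoint C₁ C₂ := by
      refine Set.disjoint_of_subset hC₁sub hC₂sub ?_
      exact Set.disjoint_sdiff_left.mono_right Set.diff_subset
    have hint : ∫ x in A₀ ∪ (C₁ ∪ C₂), f x ∂μ =
        (∫ x in A₀, f x ∂μ) + ((∫ x in C₁, f x ∂μ) + ∫ x in C₂, f x ∂μ) := by
      rw [setIntegral_union (hd₁.union_right hd₂) (hC₁m.union hC₂m)
        hf.integrableOn hf.integrableOn,
        setIntegral_union hd₁₂ hC₂m hf.integrableOn hf.integrableOn]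
    refine ⟨∫ x in A₀ ∪ (C₁ ∪ C₂), f x ∂μ,
      ⟨A₀ ∪ (C₁ ∪ C₂), ((hB₁.inter hB₂).union (hC₁m.union hC₂m)), rfl⟩, ?_⟩
    rw [dist_eq_norm, hint, hsplit₁, hsplit₂]
    have he : a • ((∫ x in A₀, f x ∂μ) + ∫ x in A₁, f x ∂μ) +
        b • ((∫ x in A₀, f x ∂μ) + ∫ x in A₂, f x ∂μ) -
        ((∫ x in A₀, f x ∂μ) + ((∫ x in C₁, f x ∂μ) + ∫ x in C₂, f x ∂μ)) =
        (a • (∫ x in A₁, f x ∂μ) - ∫ x in C₁, f x ∂μ) +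
        (b • (∫ x in A₂, f x ∂μ) - ∫ x in C₂, f x ∂μ) := by
      obtain rfl : b = 1 - a := by linarith
      module
    rw [he]
    calc ‖(a • (∫ x in A₁, f x ∂μ) - ∫ x in C₁, f x ∂μ) +
          (b • (∫ x in A₂, f x ∂μ) - ∫ x in C₂, f x ∂μ)‖
        ≤ ‖a • (∫ x in A₁, f x ∂μ) - ∫ x in C₁, f x ∂μ‖ +
          ‖b • (∫ x in A₂, f x ∂μ) - ∫ x in C₂, f x ∂μ‖ := norm_add_le _ _
      _ ≤ ε / 3 + ε / 3 := by
          rw [← norm_neg (a • (∫ x in A₁, f x ∂μ) - ∫ x in C₁, f x ∂μ),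
            ← norm_neg (b • (∫ x in A₂, f x ∂μ) - ∫ x in C₂, f x ∂μ)]
          simp only [neg_sub]
          exact add_le_add hC₁ hC₂
      _ < ε := by linarith
  -- extend to the closure by continuity
  set T : Set (E × E) := {p : E × E | a • p.1 + b • p.2 ∈ closure S} with hT
  have hTclosed : IsClosed T :=
    isClosed_closure.preimage ((continuous_fst.const_smul a).add (continuous_snd.const_smul b))
  have hsub : S ×ˢ S ⊆ T := fun p hp => hcore p.1 hp.1 p.2 hp.2
  have : closure S ×ˢ closure S ⊆ T := by
    rw [← closure_prod_eq]
    exact hTclosed.closure_subset_iff.mpr hsub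
  exact this (Set.mk_mem_prod hx hy)
end

section
/- Let (X, Σ, μ) be an atomless finite measure space, E a Banach space, f, g ∈ L¹(μ, E), S ∈ Σ, and δ ∈ (0,1). Then there exists a sequence of measurable sets Eₙ ⊆ S such that the pair (μ(Eₙ), ∫_{Eₙ} (f − g) dμ) converges to δ·(μ(S), ∫_S (f − g) dμ) in ℝ × E. -/
open MeasureTheory Filter Topology ENNReal

lemma small_sets {X : Type*} [MeasurableSpace X] {μ : Measure X} [IsFiniteMeasure μ]
    (hμ : MeasureAtomless μ) {A : Set X} (hA : MeasurableSet A) (h0 : μ A ≠ 0)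
    {ε : ℝ≥0∞} (hε : ε ≠ 0) : ∃ B ⊆ A, MeasurableSet B ∧ 0 < μ B ∧ μ B < ε := by
  set 𝒮 : Set ℝ≥0∞ := {m | ∃ B ⊆ A, MeasurableSet B ∧ 0 < μ B ∧ μ B = m} with h𝒮
  have hne : 𝒮.Nonempty := ⟨μ A, A, subset_rfl, hA, h0.bot_lt, rfl⟩
  set m := sInf 𝒮 with hm
  rcases eq_or_ne m 0 with h | h
  · have : sInf 𝒮 < ε := by rw [← hm, h]; exact hε.bot_lt
    obtain ⟨x, hx, hxε⟩ := exists_lt_of_csInf_lt hne this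
    obtain ⟨B, hBA, hBm, hB0, rfl⟩ := hx
    exact ⟨B, hBA, hBm, hB0, hxε⟩
  · exfalso
    have hmtop : m ≠ ⊤ := by
      refine ne_top_of_le_ne_top (measure_ne_top μ A) (csInf_le ?_ ⟨A, subset_rfl, hA, h0.bot_lt, rfl⟩)
      exact OrderBot.bddBelow 𝒮
    have h2m : m < 2 * m := by
      have := h.bot_lt
      calc m = 1 * m := (one_mul m).symm
      _ < 2 * m := by
          rw [mul_comm 1 m, mul_comm 2 m]; exact ENNReal.mul_lt_mul_right h hmtop (by norm_num)
    obtain ⟨x, hx, hx2⟩ := exists_lt_of_csInf_lt hne h2m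
    obtain ⟨B, hBA, hBm, hB0, rfl⟩ := hx
    obtain ⟨C, hCB, hCm, hC0, hClt⟩ := hμ B hBm hB0.ne'
    have hCmem : μ C ∈ 𝒮 := ⟨C, hCB.trans hBA, hCm, hC0, rfl⟩
    have hC_ge : m ≤ μ C := csInf_le (OrderBot.bddBelow 𝒮) hCmem
    have hdiff : μ (B \ C) = μ B - μ C := measure_diff hCB hCm.nullMeasurableSet (measure_ne_top μ C)
    have hBC0 : 0 < μ (B \ C) := by
      rw [hdiff]
      exact tsub_pos_of_lt hClt
    have hBCmem : μ (B \ C) ∈ 𝒮 := ⟨B \ C, (Set.diff_subset).trans hBA, hBm.diff hCm, hBC0, rfl⟩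
    have : m ≤ μ (B \ C) := csInf_le (OrderBot.bddBelow 𝒮) hBCmem
    have hB_ge : m ≤ μ B := csInf_le (OrderBot.bddBelow 𝒮) ⟨B, hBA, hBm, hB0, rfl⟩
    have hlt : μ (B \ C) < m := by
      rw [hdiff]
      calc μ B - μ C ≤ μ B - m := tsub_le_tsub_left hC_ge _
      _ < m := by
          rw [ENNReal.sub_lt_iff_lt_right hmtop hB_ge]
          rwa [two_mul] at hx2
    exact absurd (this.trans_lt hlt) (lt_irrefl m)

lemma sierpinski {X : Type*} [MeasurableSpace X] {μ : Measure X} [IsFiniteMeasure μ]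
    (hμ : MeasureAtomless μ) {A : Set X} (hA : MeasurableSet A) {r : ℝ≥0∞} (hr : r ≤ μ A) :
    ∃ B ⊆ A, MeasurableSet B ∧ μ B = r := by
  -- choice function
  have key : ∀ t : Set X, ∃ C : Set X, t ⊆ A → MeasurableSet t → μ t ≤ r →
      (C ⊆ A \ t ∧ MeasurableSet C ∧ μ t + μ C ≤ r ∧
        ∀ C', C' ⊆ A \ t → MeasurableSet C' → μ t + μ C' ≤ r → μ C' ≤ 2 * μ C) := by
    intro t
    by_cases ht : t ⊆ A ∧ MeasurableSet t ∧ μ t ≤ r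
    swap
    · exact ⟨∅, fun h1 h2 h3 => absurd ⟨h1, h2, h3⟩ ht⟩
    set 𝒯 : Set ℝ≥0∞ := {m | ∃ C ⊆ A \ t, MeasurableSet C ∧ μ t + μ C ≤ r ∧ μ C = m} with h𝒯
    have hne : 𝒯.Nonempty := ⟨0, ∅, Set.empty_subset _, MeasurableSet.empty, by simpa using ht.2.2, by simp⟩
    set s := sSup 𝒯 with hs
    have hsle : s ≤ r := sSup_le (by rintro m ⟨C, hC1, hC2, hC3, rfl⟩; exact le_trans le_add_self hC3)
    have hstop : s ≠ ⊤ := ne_top_of_le_ne_top (ne_top_of_le_ne_top (measure_ne_top μ A) hr) hsle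
    rcases eq_or_ne s 0 with h0 | h0
    · refine ⟨∅, fun _ _ _ => ⟨Set.empty_subset _, MeasurableSet.empty, by simpa using ht.2.2,
        fun C' hC1 hC2 hC3 => ?_⟩⟩
      have : μ C' ≤ s := le_sSup ⟨C', hC1, hC2, hC3, rfl⟩
      simpa [h0] using this
    · have hhalf : s / 2 < s := ENNReal.half_lt_self h0 hstop
      obtain ⟨m, hm, hm2⟩ := exists_lt_of_lt_csSup hne hhalf
      obtain ⟨C, hC1, hC2, hC3, rfl⟩ := hm
      refine ⟨C, fun _ _ _ => ⟨hC1, hC2, hC3, fun C' h1 h2 h3 => ?_⟩⟩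
      have h4 : μ C' ≤ s := le_sSup ⟨C', h1, h2, h3, rfl⟩
      have : s = 2 * (s / 2) := by
        rw [ENNReal.mul_div_cancel' (by norm_num) (by norm_num)]
      calc μ C' ≤ s := h4
        _ = 2 * (s / 2) := this
        _ ≤ 2 * μ C := mul_le_mul_right hm2.le 2
  choose g hg using key
  -- the increasing sequence
  set t : ℕ → Set X := fun n => Nat.rec (∅ : Set X) (fun _ tn => tn ∪ g tn) n with htdef
  have ht0 : t 0 = ∅ := rfl
  have htsucc : ∀ n, t (n + 1) = t n ∪ g (t n) := fun n => rfl
  have hgood : ∀ n, t n ⊆ A ∧ MeasurableSet (t n) ∧ μ (t n) ≤ r := by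
    intro n
    induction n with
    | zero => exact ⟨by simp [ht0], by simp [ht0], by simp [ht0]⟩
    | succ n ih =>
      obtain ⟨h1, h2, h3⟩ := ih
      obtain ⟨hg1, hg2, hg3, _⟩ := hg (t n) h1 h2 h3
      refine ⟨?_, ?_, ?_⟩
      · rw [htsucc]; exact Set.union_subset h1 (hg1.trans Set.diff_subset)
      · rw [htsucc]; exact h2.union hg2
      · rw [htsucc]
        calc μ (t n ∪ g (t n)) ≤ μ (t n) + μ (g (t n)) := measure_union_le _ _
          _ ≤ r := hg3
  have hmeas_succ : ∀ n, μ (t (n + 1)) = μ (t n) + μ (g (t n)) := by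
    intro n
    obtain ⟨h1, h2, h3⟩ := hgood n
    obtain ⟨hg1, hg2, _, _⟩ := hg (t n) h1 h2 h3
    rw [htsucc, measure_union (Set.disjoint_of_subset_right hg1 Set.disjoint_sdiff_right) hg2]
  have hmono : Monotone t := monotone_nat_of_le_succ (fun n => by rw [htsucc]; exact Set.subset_union_left)
  set T := ⋃ n, t n with hT
  have hTA : T ⊆ A := Set.iUnion_subset fun n => (hgood n).1
  have hTm : MeasurableSet T := MeasurableSet.iUnion fun n => (hgood n).2.1
  have hTle : μ T ≤ r := by
    have := tendsto_measure_iUnion_atTop (μ := μ) hmono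
    exact le_of_tendsto this (Filter.Eventually.of_forall fun n => (hgood n).2.2)
  refine ⟨T, hTA, hTm, ?_⟩
  by_contra hne'
  have hTlt : μ T < r := lt_of_le_of_ne hTle hne'
  have hAT0 : μ (A \ T) ≠ 0 := by
    have : μ (A \ T) = μ A - μ T := measure_diff hTA hTm.nullMeasurableSet (measure_ne_top μ T)
    rw [this]
    exact (tsub_pos_of_lt (hTlt.trans_le hr)).ne'
  obtain ⟨C, hCA, hCm, hC0, hClt⟩ := small_sets hμ (hA.diff hTm) hAT0
      (ε := r - μ T) (tsub_pos_of_lt hTlt).ne'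
  set c := μ C / 2 with hc
  have hc0 : c ≠ 0 := by
    simp only [hc, ENNReal.div_eq_top, ne_eq, ENNReal.div_eq_zero_iff]
    push_neg
    exact ⟨hC0.ne', by norm_num⟩
  have hctop : c ≠ ⊤ := by
    have : μ C ≠ ⊤ := measure_ne_top μ C
    simp [hc, ENNReal.div_eq_top, this]
  -- each step adds at least c
  have hstep : ∀ n, c ≤ μ (g (t n)) := by
    intro n
    obtain ⟨h1, h2, h3⟩ := hgood n
    obtain ⟨_, _, _, hmax⟩ := hg (t n) h1 h2 h3
    have hCsub : C ⊆ A \ t n := hCA.trans (Set.diff_subset_diff_right (Set.subset_iUnion t n))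
    have hsum : μ (t n) + μ C ≤ r := by
      have h5 : μ (t n) ≤ μ T := measure_mono (Set.subset_iUnion t n)
      have h6 : μ T + μ C < r := lt_tsub_iff_left.mp hClt
      exact le_of_lt (lt_of_le_of_lt (add_le_add_left h5 _) h6)
    have h7 : μ C ≤ 2 * μ (g (t n)) := hmax C hCsub hCm hsum
    exact ENNReal.div_le_of_le_mul (by rwa [mul_comm] at h7)
  have hgrow : ∀ n : ℕ, (n : ℝ≥0∞) * c ≤ μ (t n) := by
    intro n
    induction n with
    | zero => simp
    | succ n ih =>
      rw [hmeas_succ]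
      push_cast
      rw [add_mul, one_mul]
      exact add_le_add ih (hstep n)
  have hrt : r ≠ ⊤ := ne_top_of_le_ne_top (measure_ne_top μ A) hr
  obtain ⟨n, hn⟩ := ENNReal.exists_nat_gt (r := r / c) (ENNReal.div_lt_top hrt hc0).ne
  have : r < (n : ℝ≥0∞) * c := by
    rwa [ENNReal.div_lt_iff (Or.inl hc0) (Or.inl hctop)] at hn
  exact absurd ((hgrow n).trans ((hgood n).2.2)) (not_le.mpr this)

lemma approx_step {X : Type*} [MeasurableSpace X] {μ : Measure X} [IsFiniteMeasure μ]
    (hμ : MeasureAtomless μ)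
    {E : Type*} [NormedAddCommGroup E] [NormedSpace ℝ E] [CompleteSpace E]
    {h : X → E} (hh : Integrable h μ)
    {S : Set X} (hS : MeasurableSet S) {δ : ℝ} (hδ : δ ∈ Set.Ioo (0 : ℝ) 1)
    {ε : ℝ} (hε : 0 < ε) :
    ∃ B ⊆ S, MeasurableSet B ∧ μ B = ENNReal.ofReal δ * μ S ∧
      ‖(∫ x in B, h x ∂μ) - δ • ∫ x in S, h x ∂μ‖ ≤ ε := by
  set δ' := ENNReal.ofReal δ with hδ'
  have hδ'le1 : δ' ≤ 1 := by
    rw [hδ']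
    exact ENNReal.ofReal_le_one.mpr hδ.2.le
  obtain ⟨φ, hφ, hφmem⟩ := (memLp_one_iff_integrable.mpr hh).exists_simpleFunc_eLpNorm_sub_lt
    (p := 1) one_ne_top (ε := ENNReal.ofReal (ε / 2)) (by positivity)
  have hφint : Integrable φ μ := memLp_one_iff_integrable.mp hφmem
  have hsubint : Integrable (fun x => h x - φ x) μ := hh.sub hφint
  set η := ∫ x, ‖h x - φ x‖ ∂μ with hη
  have hη0 : 0 ≤ η := integral_nonneg fun x => norm_nonneg _
  have hηle : η ≤ ε / 2 := by
    have h1 : ENNReal.ofReal η = ∫⁻ x, ‖h x - φ x‖₊ ∂μ :=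
      ofReal_integral_norm_eq_lintegral_enorm hsubint
    have h2 : eLpNorm (h - ⇑φ) 1 μ = ∫⁻ x, ‖h x - φ x‖₊ ∂μ := by
      rw [eLpNorm_one_eq_lintegral_enorm]; rfl
    have h3 : ENNReal.ofReal η < ENNReal.ofReal (ε / 2) := by rw [h1, ← h2]; exact hφ
    exact le_of_lt ((ENNReal.ofReal_lt_ofReal_iff_of_nonneg hη0).mp h3)
  -- fibers
  set A : E → Set X := fun c => S ∩ φ ⁻¹' {c} with hA
  have hAm : ∀ c, MeasurableSet (A c) := fun c => hS.inter (φ.measurableSet_fiber c)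
  have hkey : ∀ c : E, ∃ B, B ⊆ A c ∧ MeasurableSet B ∧ μ B = δ' * μ (A c) := by
    intro c
    obtain ⟨B, h1, h2, h3⟩ := sierpinski hμ (hAm c)
      (r := δ' * μ (A c)) (by calc δ' * μ (A c) ≤ 1 * μ (A c) := by gcongr
                                _ = μ (A c) := one_mul _)
    exact ⟨B, h1, h2, h3⟩
  choose B hB1 hB2 hB3 using hkey
  set En := ⋃ c ∈ φ.range, B c with hEn
  have hBc_sub : ∀ c, B c ⊆ φ ⁻¹' {c} := fun c => (hB1 c).trans Set.inter_subset_right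
  have hBdisj : (↑φ.range : Set E).PairwiseDisjoint B := by
    intro c _ d _ hcd
    refine Set.disjoint_of_subset (hBc_sub c) (hBc_sub d) ?_
    simp only [Set.disjoint_left, Set.mem_preimage, Set.mem_singleton_iff]
    intro x hx hx'
    exact hcd (hx ▸ hx')
  have hAdisj : (↑φ.range : Set E).PairwiseDisjoint A := by
    intro c _ d _ hcd
    refine Set.disjoint_of_subset Set.inter_subset_right Set.inter_subset_right ?_
    simp only [Set.disjoint_left, Set.mem_preimage, Set.mem_singleton_iff]
    intro x hx hx'
    exact hcd (hx ▸ hx')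
  have hEnm : MeasurableSet En := by
    exact Finset.measurableSet_biUnion _ fun c _ => hB2 c
  have hEnS : En ⊆ S := by
    refine Set.iUnion₂_subset fun c _ => (hB1 c).trans Set.inter_subset_left
  have hScover : S = ⋃ c ∈ φ.range, A c := by
    ext x
    constructor
    · intro hx
      exact Set.mem_biUnion (φ.mem_range_self x) ⟨hx, rfl⟩
    · intro hx
      obtain ⟨c, _, hc, _⟩ := Set.mem_iUnion₂.mp hx
      exact hc
  have hμEn : μ En = δ' * μ S := by
    rw [hEn, measure_biUnion_finset hBdisj fun c _ => hB2 c]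
    conv_rhs => rw [hScover, measure_biUnion_finset hAdisj fun c _ => hAm c]
    rw [Finset.mul_sum]
    exact Finset.sum_congr rfl fun c _ => hB3 c
  -- integrals of φ
  have hBconst : ∀ c : E, ∫ x in B c, φ x ∂μ = (μ (B c)).toReal • c := by
    intro c
    rw [setIntegral_congr_fun (hB2 c) (g := fun _ => c) (fun x hx => hBc_sub c hx),
      setIntegral_const, measureReal_def]
  have hAconst : ∀ c : E, ∫ x in A c, φ x ∂μ = (μ (A c)).toReal • c := by
    intro c
    rw [setIntegral_congr_fun (hAm c) (g := fun _ => c) (fun x hx => hx.2), setIntegral_const, measureReal_def]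
  have hφEn : ∫ x in En, φ x ∂μ = δ • ∫ x in S, φ x ∂μ := by
    rw [hEn, integral_biUnion_finset _ (fun c _ => hB2 c) hBdisj
      (fun c _ => hφint.integrableOn)]
    conv_rhs => rw [hScover, integral_biUnion_finset _ (fun c _ => hAm c) hAdisj
      (fun c _ => hφint.integrableOn)]
    rw [Finset.smul_sum]
    refine Finset.sum_congr rfl fun c _ => ?_
    rw [hBconst, hAconst, hB3, smul_smul, ENNReal.toReal_mul, hδ', ENNReal.toReal_ofReal hδ.1.le]
  refine ⟨En, hEnS, hEnm, hμEn, ?_⟩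
  have hdecomp : (∫ x in En, h x ∂μ) - δ • ∫ x in S, h x ∂μ
      = (∫ x in En, (h x - φ x) ∂μ) + δ • ∫ x in S, (φ x - h x) ∂μ := by
    rw [integral_sub hh.integrableOn hφint.integrableOn,
      integral_sub hφint.integrableOn hh.integrableOn, smul_sub, hφEn]
    abel
  rw [hdecomp]
  have hb1 : ‖∫ x in En, (h x - φ x) ∂μ‖ ≤ η := by
    calc ‖∫ x in En, (h x - φ x) ∂μ‖ ≤ ∫ x in En, ‖h x - φ x‖ ∂μ :=
          norm_integral_le_integral_norm _
      _ ≤ η := setIntegral_le_integral hsubint.norm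
          (Filter.Eventually.of_forall fun x => norm_nonneg _)
  have hb2 : ‖δ • ∫ x in S, (φ x - h x) ∂μ‖ ≤ δ * η := by
    rw [norm_smul, Real.norm_of_nonneg hδ.1.le]
    have : ‖∫ x in S, (φ x - h x) ∂μ‖ ≤ η := by
      calc ‖∫ x in S, (φ x - h x) ∂μ‖ ≤ ∫ x in S, ‖φ x - h x‖ ∂μ :=
            norm_integral_le_integral_norm _
        _ = ∫ x in S, ‖h x - φ x‖ ∂μ := by
            refine integral_congr_ae (Filter.Eventually.of_forall fun x => norm_sub_rev _ _)
        _ ≤ η := setIntegral_le_integral hsubint.norm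
            (Filter.Eventually.of_forall fun x => norm_nonneg _)
    exact mul_le_mul_of_nonneg_left this hδ.1.le
  calc ‖(∫ x in En, (h x - φ x) ∂μ) + δ • ∫ x in S, (φ x - h x) ∂μ‖
      ≤ ‖∫ x in En, (h x - φ x) ∂μ‖ + ‖δ • ∫ x in S, (φ x - h x) ∂μ‖ := norm_add_le _ _
    _ ≤ η + δ * η := add_le_add hb1 hb2
    _ ≤ ε / 2 + 1 * (ε / 2) := by
        refine add_le_add hηle ?_
        refine mul_le_mul hδ.2.le hηle hη0 zero_le_one
    _ = ε := by ring

/-- There is a sequence of measurable subsets `Eₙ` of `S` with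
`(μ Eₙ, ∫_{Eₙ} (f - g)) → δ • (μ S, ∫_S (f - g))`. -/
theorem exists_approx_fraction_sets {X : Type*} [MeasurableSpace X] (μ : Measure X)
    [IsFiniteMeasure μ] (hμ : MeasureAtomless μ)
    {E : Type*} [NormedAddCommGroup E] [NormedSpace ℝ E] [CompleteSpace E]
    (f g : X → E) (hf : Integrable f μ) (hg : Integrable g μ)
    {S : Set X} (hS : MeasurableSet S) {δ : ℝ} (hδ : δ ∈ Set.Ioo (0 : ℝ) 1) :
    ∃ En : ℕ → Set X, (∀ n, MeasurableSet (En n) ∧ En n ⊆ S) ∧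
      Tendsto (fun n => (((μ (En n)).toReal : ℝ), ∫ x in En n, (f x - g x) ∂μ)) atTop
        (𝓝 (δ * (μ S).toReal, δ • ∫ x in S, (f x - g x) ∂μ)) := by
  have hh : Integrable (fun x => f x - g x) μ := hf.sub hg
  have key : ∀ n : ℕ, ∃ B ⊆ S, MeasurableSet B ∧ μ B = ENNReal.ofReal δ * μ S ∧
      ‖(∫ x in B, (f x - g x) ∂μ) - δ • ∫ x in S, (f x - g x) ∂μ‖ ≤ 1 / (n + 1) := by
    intro n
    exact approx_step hμ hh hS hδ (by positivity)
  choose En hEnS hEnm hEnμ hEnint using key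
  refine ⟨En, fun n => ⟨hEnm n, hEnS n⟩, ?_⟩
  have h1 : Tendsto (fun n => ((μ (En n)).toReal : ℝ)) atTop (𝓝 (δ * (μ S).toReal)) := by
    have : ∀ n, ((μ (En n)).toReal : ℝ) = δ * (μ S).toReal := by
      intro n
      rw [hEnμ n, ENNReal.toReal_mul, ENNReal.toReal_ofReal hδ.1.le]
    simp only [this]
    exact tendsto_const_nhds
  have h2 : Tendsto (fun n => ∫ x in En n, (f x - g x) ∂μ) atTop
      (𝓝 (δ • ∫ x in S, (f x - g x) ∂μ)) := by
    rw [tendsto_iff_norm_sub_tendsto_zero]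
    refine squeeze_zero (fun n => norm_nonneg _) hEnint ?_
    exact tendsto_one_div_add_atTop_nhds_zero_nat
  exact h1.prodMk_nhds h2
end

section
/- Let (X, Σ, μ) be an atomless finite measure space, E a Banach space, and f, g ∈ L¹(μ, E). For S ∈ Σ with μ(S) > 0 and any δ ∈ (0,1), there exists a sequence Fₙ ∈ Σ with Fₙ ⊆ S, μ(Fₙ) = δ·μ(S) for every n, and ∫_{Fₙ}(f − g) dμ → δ·∫_S (f − g) dμ in norm. -/
open MeasureTheory Filter Topology
open ENNReal

lemma atomless_half {X : Type*} [MeasurableSpace X] {μ : Measure X}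
    (hμ : MeasureAtomless μ) {A : Set X} (hA : MeasurableSet A) (h0 : μ A ≠ 0)
    (htop : μ A ≠ ∞) : ∃ B ⊆ A, MeasurableSet B ∧ 0 < μ B ∧ μ B ≤ μ A / 2 := by
  obtain ⟨B, hBA, hB, hB0, hBlt⟩ := hμ A hA h0
  by_cases hle : μ B ≤ μ A / 2
  · exact ⟨B, hBA, hB, hB0, hle⟩
  · refine ⟨A \ B, Set.diff_subset, hA.diff hB, ?_, ?_⟩
    · rw [measure_diff hBA hB.nullMeasurableSet (hBlt.trans_le le_top).ne]
      exact tsub_pos_of_lt hBlt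
    · rw [measure_diff hBA hB.nullMeasurableSet (hBlt.trans_le le_top).ne]
      calc μ A - μ B ≤ μ A - μ A / 2 := tsub_le_tsub_left (le_of_not_ge hle) _
        _ = μ A / 2 := ENNReal.sub_half htop

lemma atomless_small {X : Type*} [MeasurableSpace X] {μ : Measure X}
    (hμ : MeasureAtomless μ) {A : Set X} (hA : MeasurableSet A) (h0 : μ A ≠ 0)
    (htop : μ A ≠ ∞) {ε : ℝ≥0∞} (hε : ε ≠ 0) :
    ∃ B ⊆ A, MeasurableSet B ∧ 0 < μ B ∧ μ B ≤ ε := by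
  have main : ∀ n : ℕ, ∃ B ⊆ A, MeasurableSet B ∧ 0 < μ B ∧ μ B ≤ μ A * 2⁻¹ ^ n := by
    intro n
    induction n with
    | zero => exact ⟨A, le_refl _, hA, h0.bot_lt, by simp⟩
    | succ n ih =>
      obtain ⟨B, hBA, hB, hB0, hBle⟩ := ih
      have hBtop : μ B ≠ ∞ := ((hBle.trans_lt (by
        exact lt_of_le_of_lt (mul_le_of_le_one_right' (pow_le_one' (by simp) n)) htop.lt_top))).ne
      obtain ⟨C, hCB, hC, hC0, hCle⟩ := atomless_half hμ hB hB0.ne' hBtop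
      refine ⟨C, hCB.trans hBA, hC, hC0, ?_⟩
      calc μ C ≤ μ B / 2 := hCle
        _ = μ B * 2⁻¹ := by rw [ENNReal.div_eq_inv_mul, mul_comm]
        _ ≤ (μ A * 2⁻¹ ^ n) * 2⁻¹ := by gcongr
        _ = μ A * 2⁻¹ ^ (n + 1) := by ring
  have htend : Tendsto (fun n : ℕ => μ A * 2⁻¹ ^ n) atTop (𝓝 0) := by
    have h1 : Tendsto (fun n : ℕ => (2⁻¹ : ℝ≥0∞) ^ n) atTop (𝓝 0) :=
      ENNReal.tendsto_pow_atTop_nhds_zero_of_lt_one (by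
        rw [ENNReal.inv_lt_one]; exact one_lt_two)
    simpa using ENNReal.Tendsto.const_mul h1 (Or.inr htop)
  obtain ⟨n, hn⟩ := (htend.eventually_lt_const hε.bot_lt).exists
  obtain ⟨B, hBA, hB, hB0, hBle⟩ := main n
  exact ⟨B, hBA, hB, hB0, hBle.trans hn.le⟩

lemma atomless_exists_subset_measure_eq {X : Type*} [MeasurableSpace X] {μ : Measure X}
    (hμ : MeasureAtomless μ) {A : Set X} (hA : MeasurableSet A) (htop : μ A ≠ ∞)
    {r : ℝ≥0∞} (hr : r ≤ μ A) : ∃ B ⊆ A, MeasurableSet B ∧ μ B = r := by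
  have hrtop : r ≠ ∞ := (hr.trans_lt htop.lt_top).ne
  set good : Set X → Prop := fun B => MeasurableSet B ∧ B ⊆ A ∧ μ B ≤ r with hgood
  set sB : Set X → ℝ≥0∞ :=
    fun B => sSup {t | ∃ C, MeasurableSet C ∧ C ⊆ A \ B ∧ μ B + μ C ≤ r ∧ μ C = t} with hsB
  have key : ∀ B : {B // good B}, ∃ C, MeasurableSet C ∧ C ⊆ A \ B.1 ∧
      μ B.1 + μ C ≤ r ∧ sB B.1 / 2 ≤ μ C := by
    rintro ⟨B, hBm, hBA, hBr⟩
    by_cases h0 : sB B = 0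
    · exact ⟨∅, MeasurableSet.empty, Set.empty_subset _, by simpa using hBr, by simp [h0]⟩
    · have hub : sB B ≤ r := by
        apply sSup_le
        rintro t ⟨C, -, -, hCr, rfl⟩
        exact le_trans (le_add_self) hCr
      have hhalf : sB B / 2 < sB B :=
        ENNReal.half_lt_self h0 (hub.trans_lt hrtop.lt_top).ne
      obtain ⟨t, ht, hlt⟩ := lt_sSup_iff.mp hhalf
      obtain ⟨C, hCm, hCA, hCr, rfl⟩ := ht
      exact ⟨C, hCm, hCA, hCr, hlt.le⟩
  choose step h1 h2 h3 h4 using key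
  have hgood_step : ∀ B : {B // good B}, good (B.1 ∪ step B) := by
    rintro B
    have hdisj : Disjoint B.1 (step B) := disjoint_sdiff_self_right.mono_right (h2 B)
    refine ⟨B.2.1.union (h1 B), Set.union_subset B.2.2.1 ((h2 B).trans Set.diff_subset), ?_⟩
    rw [measure_union hdisj (h1 B)]
    exact h3 B
  set seq : ℕ → {B // good B} := fun n => Nat.rec
    ⟨∅, MeasurableSet.empty, Set.empty_subset _, by simp⟩
    (fun _ p => ⟨p.1 ∪ step p, hgood_step p⟩) n with hseq
  have hmeas_succ : ∀ n, μ (seq (n+1)).1 = μ (seq n).1 + μ (step (seq n)) := by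
    intro n
    have hdisj : Disjoint (seq n).1 (step (seq n)) :=
      disjoint_sdiff_self_right.mono_right (h2 (seq n))
    exact measure_union hdisj (h1 (seq n))
  have hmono : Monotone (fun n => (seq n).1) :=
    monotone_nat_of_le_succ (fun n => Set.subset_union_left)
  set Binf := ⋃ n, (seq n).1 with hBinf
  have hBinfm : MeasurableSet Binf := MeasurableSet.iUnion (fun n => (seq n).2.1)
  have hBinfA : Binf ⊆ A := Set.iUnion_subset (fun n => (seq n).2.2.1)
  have hBinfr : μ Binf ≤ r := by
    rw [Directed.measure_iUnion hmono.directed_le]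
    exact iSup_le (fun n => (seq n).2.2.2)
  refine ⟨Binf, hBinfA, hBinfm, ?_⟩
  by_contra hne
  have hlt : μ Binf < r := lt_of_le_of_ne hBinfr hne
  -- find a small positive-measure set in A \ Binf
  have hd0 : μ (A \ Binf) ≠ 0 := by
    rw [measure_diff hBinfA hBinfm.nullMeasurableSet (hBinfr.trans_lt hrtop.lt_top).ne]
    exact (tsub_pos_of_lt (hlt.trans_le hr)).ne'
  have hdtop : μ (A \ Binf) ≠ ∞ := ((measure_mono Set.diff_subset).trans_lt htop.lt_top).ne
  obtain ⟨D, hDA, hDm, hD0, hDle⟩ := atomless_small hμ (hA.diff hBinfm) hd0 hdtop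
    (ε := r - μ Binf) (tsub_pos_of_lt hlt).ne'
  set c := μ D / 2 with hc
  have hc0 : c ≠ 0 := by
    simp [hc, ENNReal.div_eq_zero_iff, hD0.ne']
  have hctop : c ≠ ∞ := by
    simp only [hc]
    exact (ENNReal.div_lt_top (hDle.trans_lt (tsub_le_self.trans_lt hrtop.lt_top)).ne
      (by norm_num)).ne
  have hstep_ge : ∀ n, c ≤ μ (step (seq n)) := by
    intro n
    have hDsub : D ⊆ A \ (seq n).1 :=
      hDA.trans (Set.diff_subset_diff_right (Set.subset_iUnion (fun n => (seq n).1) n))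
    have hsum : μ (seq n).1 + μ D ≤ r := by
      calc μ (seq n).1 + μ D ≤ μ Binf + (r - μ Binf) :=
            add_le_add (measure_mono (Set.subset_iUnion (fun n => (seq n).1) n)) hDle
        _ = r := add_tsub_cancel_of_le hlt.le
    have hmem : μ D ≤ sB (seq n).1 := le_sSup ⟨D, hDm, hDsub, hsum, rfl⟩
    calc c = μ D / 2 := rfl
      _ ≤ sB (seq n).1 / 2 := by gcongr
      _ ≤ μ (step (seq n)) := h4 (seq n)
  have hlb : ∀ n : ℕ, (n : ℝ≥0∞) * c ≤ μ (seq n).1 := by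
    intro n
    induction n with
    | zero => simp
    | succ n ih =>
      rw [hmeas_succ n]
      push_cast
      rw [add_one_mul]
      exact add_le_add ih (hstep_ge n)
  obtain ⟨n, hn⟩ := ENNReal.exists_nat_gt (ENNReal.div_lt_top hrtop hc0).ne
  have : r < (n : ℝ≥0∞) * c := by
    rwa [ENNReal.div_lt_iff (Or.inl hc0) (Or.inl hctop)] at hn
  exact absurd ((hlb n).trans (seq n).2.2.2) (not_le.mpr this)

lemma exact_fraction_integral_approx {X : Type*} [MeasurableSpace X]
    (μ : Measure X) [IsFiniteMeasure μ] (hμ : MeasureAtomless μ)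
    {E : Type*} [NormedAddCommGroup E] [NormedSpace ℝ E] [CompleteSpace E]
    {h : X → E} (hh : Integrable h μ) {S : Set X} (hS : MeasurableSet S)
    {δ : ℝ} (hδ0 : 0 < δ) (hδ1 : δ < 1) {ε : ℝ} (hε : 0 < ε) :
    ∃ F, MeasurableSet F ∧ F ⊆ S ∧ μ F = ENNReal.ofReal δ * μ S ∧
      ‖(∫ x in F, h x ∂μ) - δ • ∫ x in S, h x ∂μ‖ ≤ 2 * ε := by
  have hmem : MemLp h 1 μ := memLp_one_iff_integrable.mpr hh
  obtain ⟨φ, hφlt, hφmem⟩ := hmem.exists_simpleFunc_eLpNorm_sub_lt (by simp)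
    (ENNReal.ofReal_pos.mpr hε).ne'
  have hφint : Integrable φ μ := memLp_one_iff_integrable.mp hφmem
  have hsub : Integrable (fun x => h x - φ x) μ := hh.sub hφint
  set η := ∫ x, ‖h x - φ x‖ ∂μ with hηdef
  have hη0 : 0 ≤ η := integral_nonneg (fun x => norm_nonneg _)
  have hηε : η ≤ ε := by
    have h1 : η = (eLpNorm (h - ⇑φ) 1 μ).toReal := by
      rw [eLpNorm_one_eq_lintegral_enorm, hηdef,
        integral_norm_eq_lintegral_enorm hsub.aestronglyMeasurable]
      rfl
    rw [h1]
    exact (ENNReal.toReal_lt_of_lt_ofReal hφlt).le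
  -- pieces of the partition
  set T : E → Set X := fun c => S ∩ ⇑φ ⁻¹' {c} with hTdef
  have hT : ∀ c, MeasurableSet (T c) := fun c => hS.inter (φ.measurableSet_fiber c)
  have hAex : ∀ c : E, ∃ B ⊆ T c, MeasurableSet B ∧ μ B = ENNReal.ofReal δ * μ (T c) :=
    fun c => atomless_exists_subset_measure_eq hμ (hT c) (measure_ne_top μ _)
      (mul_le_of_le_one_left' (ENNReal.ofReal_le_one.mpr hδ1.le))
  choose A hA1 hA2 hA3 using hAex
  set F := ⋃ c ∈ φ.range, A c with hFdef
  have hAT : ∀ c, A c ⊆ ⇑φ ⁻¹' {c} := fun c => (hA1 c).trans Set.inter_subset_right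
  have hdisjT : (↑φ.range : Set E).Pairwise (Function.onFun Disjoint T) := by
    intro c _ d _ hcd
    rw [Function.onFun, Set.disjoint_left]
    rintro x ⟨-, hxc⟩ ⟨-, hxd⟩
    exact hcd (hxc.symm.trans hxd)
  have hdisjA : (↑φ.range : Set E).Pairwise (Function.onFun Disjoint A) :=
    fun c hc d hd hcd => ((hdisjT hc hd hcd).mono (hA1 c) (hA1 d))
  have hTunion : ⋃ c ∈ φ.range, T c = S := by
    ext x
    simp only [Set.mem_iUnion, hTdef, Set.mem_inter_iff, Set.mem_preimage,
      Set.mem_singleton_iff, exists_prop]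
    constructor
    · rintro ⟨c, -, hxS, -⟩; exact hxS
    · intro hxS; exact ⟨φ x, φ.mem_range_self x, hxS, rfl⟩
  have hFmeas : MeasurableSet F := Finset.measurableSet_biUnion _ (fun c _ => hA2 c)
  have hFS : F ⊆ S := Set.iUnion₂_subset fun c _ =>
    (hA1 c).trans Set.inter_subset_left
  have hμF : μ F = ENNReal.ofReal δ * μ S := by
    rw [hFdef, measure_biUnion_finset hdisjA (fun c _ => hA2 c)]
    rw [← hTunion, measure_biUnion_finset hdisjT (fun c _ => hT c), Finset.mul_sum]
    exact Finset.sum_congr rfl (fun c _ => hA3 c)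
  have htoReal : ∀ c, (μ (A c)).toReal = δ * (μ (T c)).toReal := by
    intro c
    rw [hA3 c, ENNReal.toReal_mul, ENNReal.toReal_ofReal hδ0.le]
  have hintA : ∀ c : E, ∫ x in A c, φ x ∂μ = (μ (A c)).toReal • c := by
    intro c
    rw [setIntegral_congr_fun (hA2 c) (g := fun _ => c) (fun x hx => hAT c hx),
      setIntegral_const, measureReal_def]
  have hintT : ∀ c : E, ∫ x in T c, φ x ∂μ = (μ (T c)).toReal • c := by
    intro c
    rw [setIntegral_congr_fun (hT c) (g := fun _ => c)
      (fun x hx => hx.2), setIntegral_const, measureReal_def]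
  have hFφ : ∫ x in F, φ x ∂μ = δ • ∫ x in S, φ x ∂μ := by
    rw [hFdef, integral_biUnion_finset _ (fun c _ => hA2 c) hdisjA
      (fun c _ => hφint.integrableOn),
      ← hTunion, integral_biUnion_finset _ (fun c _ => hT c) hdisjT
      (fun c _ => hφint.integrableOn), Finset.smul_sum]
    refine Finset.sum_congr rfl (fun c _ => ?_)
    rw [hintA c, hintT c, htoReal c, smul_smul, mul_smul, smul_smul]
  refine ⟨F, hFmeas, hFS, hμF, ?_⟩
  have hkey : (∫ x in F, h x ∂μ) - δ • ∫ x in S, h x ∂μ =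
      (∫ x in F, (h x - φ x) ∂μ) + δ • ∫ x in S, (φ x - h x) ∂μ := by
    rw [integral_sub hh.integrableOn hφint.integrableOn,
      integral_sub hφint.integrableOn hh.integrableOn, smul_sub, hFφ]
    abel
  rw [hkey]
  have hb1 : ‖∫ x in F, (h x - φ x) ∂μ‖ ≤ η := by
    refine (norm_integral_le_integral_norm _).trans ?_
    exact setIntegral_le_integral hsub.norm
      (Filter.Eventually.of_forall (fun x => norm_nonneg _))
  have hb2 : ‖δ • ∫ x in S, (φ x - h x) ∂μ‖ ≤ η := by
    rw [norm_smul, Real.norm_eq_abs, abs_of_pos hδ0]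
    have : ‖∫ x in S, (φ x - h x) ∂μ‖ ≤ η := by
      refine (norm_integral_le_integral_norm _).trans ?_
      have : ∫ x in S, ‖φ x - h x‖ ∂μ = ∫ x in S, ‖h x - φ x‖ ∂μ := by
        simp_rw [norm_sub_rev]
      rw [this]
      exact setIntegral_le_integral hsub.norm
        (Filter.Eventually.of_forall (fun x => norm_nonneg _))
    calc δ * ‖∫ x in S, (φ x - h x) ∂μ‖ ≤ 1 * η := by
          apply mul_le_mul hδ1.le this (norm_nonneg _) zero_le_one
      _ = η := one_mul η
  calc ‖(∫ x in F, (h x - φ x) ∂μ) + δ • ∫ x in S, (φ x - h x) ∂μ‖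
      ≤ ‖∫ x in F, (h x - φ x) ∂μ‖ + ‖δ • ∫ x in S, (φ x - h x) ∂μ‖ := norm_add_le _ _
    _ ≤ η + η := add_le_add hb1 hb2
    _ ≤ 2 * ε := by linarith

/-- There is a sequence `Fₙ ⊆ S` of exact measure `δ·μ S` with
`∫_{Fₙ} (f − g) → δ • ∫_S (f − g)` in norm. -/
theorem exists_exact_fraction_approx_integrals {X : Type*} [MeasurableSpace X]
    (μ : Measure X) [IsFiniteMeasure μ] (hμ : MeasureAtomless μ)
    {E : Type*} [NormedAddCommGroup E] [NormedSpace ℝ E] [CompleteSpace E]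
    (f g : X → E) (hf : Integrable f μ) (hg : Integrable g μ)
    {S : Set X} (hS : MeasurableSet S) (hSpos : 0 < μ S)
    {δ : ℝ} (hδ : δ ∈ Set.Ioo (0 : ℝ) 1) :
    ∃ Fn : ℕ → Set X, (∀ n, MeasurableSet (Fn n) ∧ Fn n ⊆ S ∧
        (μ (Fn n)).toReal = δ * (μ S).toReal) ∧
      Tendsto (fun n => ∫ x in Fn n, (f x - g x) ∂μ) atTop
        (𝓝 (δ • ∫ x in S, (f x - g x) ∂μ)) := by
  obtain ⟨hδ0, hδ1⟩ := hδ
  have hh : Integrable (fun x => f x - g x) μ := hf.sub hg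
  have hex : ∀ n : ℕ, ∃ F, MeasurableSet F ∧ F ⊆ S ∧ μ F = ENNReal.ofReal δ * μ S ∧
      ‖(∫ x in F, (f x - g x) ∂μ) - δ • ∫ x in S, (f x - g x) ∂μ‖ ≤ 2 * (1 / ((n : ℝ) + 1)) :=
    fun n => exact_fraction_integral_approx μ hμ hh hS hδ0 hδ1 (by positivity)
  choose Fn hF1 hF2 hF3 hF4 using hex
  refine ⟨Fn, fun n => ⟨hF1 n, hF2 n, ?_⟩, ?_⟩
  · rw [hF3 n, ENNReal.toReal_mul, ENNReal.toReal_ofReal hδ0.le]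
  · rw [tendsto_iff_norm_sub_tendsto_zero]
    refine squeeze_zero (fun n => norm_nonneg _) hF4 ?_
    have := (tendsto_one_div_add_atTop_nhds_zero_nat (𝕜 := ℝ)).const_mul 2
    simpa using this
end

section
/- Let (T, Σ, μ) be an atomless finite measure space, Ω a finite set, Y a Banach space, and let y, f : T × Ω → Y be such that y(·, ω), f(·, ω) ∈ L¹(μ, Y) for each ω ∈ Ω. For S ∈ Σ with μ(S) > 0 and r ∈ (0,1), there exists a sequence Eₙ ∈ Σ, Eₙ ⊆ S, such that for every ω ∈ Ω, (μ(Eₙ), ∫_{Eₙ}(y(·,ω) − f(·,ω)) dμ) → r·(μ(S), ∫_S (y(·,ω) − f(·,ω)) dμ). -/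
open MeasureTheory Filter Topology

open ENNReal in
lemma atomless_exists_small {T : Type*} [MeasurableSpace T] {μ : Measure T} [IsFiniteMeasure μ]
    (hμ : MeasureAtomless μ) {A : Set T} (hA : MeasurableSet A) (hApos : μ A ≠ 0)
    {ε : ℝ≥0∞} (hε : ε ≠ 0) :
    ∃ B, B ⊆ A ∧ MeasurableSet B ∧ 0 < μ B ∧ μ B ≤ ε := by
  have key : ∀ n : ℕ, ∃ B, B ⊆ A ∧ MeasurableSet B ∧ 0 < μ B ∧ μ B ≤ μ A * 2⁻¹ ^ n := by
    intro n
    induction n with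
    | zero => exact ⟨A, subset_rfl, hA, pos_iff_ne_zero.mpr hApos, by simp⟩
    | succ n ih =>
      obtain ⟨B, hBA, hBm, hB0, hBle⟩ := ih
      obtain ⟨C, hCB, hCm, hC0, hClt⟩ := hμ B hBm hB0.ne'
      have hhalf : μ B * 2⁻¹ ≤ μ A * 2⁻¹ ^ (n + 1) := by
        rw [pow_succ, ← mul_assoc]
        exact mul_le_mul_left hBle _
      have hBha : μ B * 2⁻¹ + μ B * 2⁻¹ = μ B := by
        rw [← div_eq_mul_inv]
        exact ENNReal.add_halves _
      rcases le_or_gt (μ C) (μ B * 2⁻¹) with h | h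
      · exact ⟨C, hCB.trans hBA, hCm, hC0, h.trans hhalf⟩
      · refine ⟨B \ C, Set.diff_subset.trans hBA, hBm.diff hCm, ?_, ?_⟩
        · rw [measure_diff hCB hCm.nullMeasurableSet (measure_ne_top μ C)]
          exact tsub_pos_of_lt hClt
        · refine le_trans ?_ hhalf
          rw [measure_diff hCB hCm.nullMeasurableSet (measure_ne_top μ C)]
          rw [tsub_le_iff_right]
          calc μ B = μ B * 2⁻¹ + μ B * 2⁻¹ := hBha.symm
            _ ≤ μ B * 2⁻¹ + μ C := by exact add_le_add_right h.le _
  -- choose n large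
  rcases eq_or_ne ε ∞ with rfl | hεt
  · obtain ⟨B, h1, h2, h3, _⟩ := key 0
    exact ⟨B, h1, h2, h3, le_top⟩
  obtain ⟨n, hn⟩ := ENNReal.exists_nat_gt ((by simp [ENNReal.div_eq_top, hε, measure_ne_top μ A] : μ A / ε ≠ ∞))
  obtain ⟨B, h1, h2, h3, h4⟩ := key n
  refine ⟨B, h1, h2, h3, h4.trans ?_⟩
  have h2n : μ A / ε < 2 ^ n := hn.trans_le (by exact_mod_cast (Nat.lt_two_pow_self (n := n)).le)
  have hmul : μ A < 2 ^ n * ε := by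
    rw [ENNReal.div_lt_iff (Or.inl hε) (Or.inl hεt)] at h2n
    exact h2n
  rw [← ENNReal.inv_pow, ← div_eq_mul_inv,
    ENNReal.div_le_iff (by positivity) (by simp)]
  exact hmul.le.trans (le_of_eq (mul_comm _ _))

open ENNReal in
lemma atomless_sierpinski {T : Type*} [MeasurableSpace T] {μ : Measure T} [IsFiniteMeasure μ]
    (hμ : MeasureAtomless μ) {A : Set T} (hA : MeasurableSet A) {c : ℝ≥0∞} (hc : c ≤ μ A) :
    ∃ B, B ⊆ A ∧ MeasurableSet B ∧ μ B = c := by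
  classical
  set Good : Set T → Prop := fun B => MeasurableSet B ∧ B ⊆ A ∧ μ B ≤ c with hGood
  -- key choice of an almost-maximal admissible addition
  have key : ∀ B : Set T, Good B → ∃ D : Set T, MeasurableSet D ∧ D ⊆ A \ B ∧
      μ D ≤ c - μ B ∧ ∀ D' : Set T, MeasurableSet D' → D' ⊆ A \ B → μ D' ≤ c - μ B →
        μ D' ≤ 2 * μ D := by
    intro B hB
    set d : ℝ≥0∞ := ⨆ D' : {D' : Set T // MeasurableSet D' ∧ D' ⊆ A \ B ∧ μ D' ≤ c - μ B}, μ D'.1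
      with hd
    have hdle : ∀ D' : Set T, MeasurableSet D' → D' ⊆ A \ B → μ D' ≤ c - μ B → μ D' ≤ d :=
      fun D' h1 h2 h3 => le_iSup_of_le ⟨D', h1, h2, h3⟩ le_rfl
    rcases eq_or_ne d 0 with hd0 | hd0
    · refine ⟨∅, MeasurableSet.empty, Set.empty_subset _, by simp, fun D' h1 h2 h3 => ?_⟩
      simpa [hd0] using hdle D' h1 h2 h3
    · have hdt : d ≠ ∞ := by
        refine ne_top_of_le_ne_top (measure_ne_top μ A) (iSup_le fun D' => ?_)
        exact measure_mono (D'.2.2.1.trans Set.diff_subset)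
      have : d / 2 < d := ENNReal.half_lt_self hd0 hdt
      obtain ⟨D, hD⟩ := lt_iSup_iff.mp this
      refine ⟨D.1, D.2.1, D.2.2.1, D.2.2.2, fun D' h1 h2 h3 => ?_⟩
      calc μ D' ≤ d := hdle D' h1 h2 h3
        _ ≤ 2 * μ D.1 := by
          calc d = d / 2 + d / 2 := (ENNReal.add_halves d).symm
            _ ≤ μ D.1 + μ D.1 := add_le_add hD.le hD.le
            _ = 2 * μ D.1 := (two_mul _).symm
  choose D hDm hDs hDle hDmax using key
  have hGoodEmpty : Good ∅ := ⟨MeasurableSet.empty, Set.empty_subset _, by simp⟩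
  have hstep : ∀ p : {B : Set T // Good B}, Good (p.1 ∪ D p.1 p.2) := by
    rintro ⟨B, hB⟩
    refine ⟨hB.1.union (hDm _ _), Set.union_subset hB.2.1 ((hDs _ _).trans Set.diff_subset), ?_⟩
    have hdisj : Disjoint B (D B hB) :=
      Set.disjoint_of_subset_right (hDs _ _) Set.disjoint_sdiff_right
    rw [measure_union hdisj (hDm _ _)]
    calc μ B + μ (D B hB) ≤ μ B + (c - μ B) := add_le_add_right (hDle _ _) _
      _ = c := add_tsub_cancel_of_le hB.2.2
  set seq : ℕ → {B : Set T // Good B} :=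
    fun n => Nat.rec ⟨∅, hGoodEmpty⟩ (fun _ p => ⟨p.1 ∪ D p.1 p.2, hstep p⟩) n with hseq
  have hseq_succ : ∀ n, (seq (n+1)).1 = (seq n).1 ∪ D (seq n).1 (seq n).2 := fun n => rfl
  have hmono : Monotone fun n => (seq n).1 :=
    monotone_nat_of_le_succ fun n => by rw [hseq_succ]; exact Set.subset_union_left
  set Binf : Set T := ⋃ n, (seq n).1 with hBinf
  have hBinfm : MeasurableSet Binf := MeasurableSet.iUnion fun n => (seq n).2.1
  have hBinfA : Binf ⊆ A := Set.iUnion_subset fun n => (seq n).2.2.1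
  have hμBinf : μ Binf = ⨆ n, μ (seq n).1 := Directed.measure_iUnion (hmono.directed_le)
  have hBinfc : μ Binf ≤ c := by
    rw [hμBinf]; exact iSup_le fun n => (seq n).2.2.2
  refine ⟨Binf, hBinfA, hBinfm, ?_⟩
  by_contra hne
  have hlt : μ Binf < c := lt_of_le_of_ne hBinfc hne
  -- find a positive small set in the remainder
  have hrem : μ (A \ Binf) ≠ 0 := by
    have h1 : μ (A \ Binf) = μ A - μ Binf :=
      measure_diff hBinfA hBinfm.nullMeasurableSet (measure_ne_top μ _)
    have : (0:ℝ≥0∞) < μ A - μ Binf := tsub_pos_of_lt (hlt.trans_le hc)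
    rw [h1]; exact this.ne'
  obtain ⟨D₀, hD₀sub, hD₀m, hD₀pos, hD₀le⟩ :=
    atomless_exists_small hμ (hA.diff hBinfm) hrem (ε := c - μ Binf) (tsub_pos_of_lt hlt).ne'
  -- each step adds at least μ D₀ / 2
  have hstep_ge : ∀ n, μ (seq n).1 + μ D₀ / 2 ≤ μ (seq (n+1)).1 := by
    intro n
    have hsub : D₀ ⊆ A \ (seq n).1 :=
      hD₀sub.trans (Set.diff_subset_diff_right (le_iSup (fun n => (seq n).1) n))
    have hle : μ D₀ ≤ c - μ (seq n).1 :=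
      hD₀le.trans (tsub_le_tsub_left (measure_mono (le_iSup (fun n => (seq n).1) n)) c)
    have h2 : μ D₀ ≤ 2 * μ (D (seq n).1 (seq n).2) := hDmax _ _ D₀ hD₀m hsub hle
    have h3 : μ D₀ / 2 ≤ μ (D (seq n).1 (seq n).2) := by
      rw [ENNReal.div_le_iff_le_mul (Or.inl two_ne_zero) (Or.inl ofNat_ne_top)]
      exact h2.trans (le_of_eq (mul_comm _ _))
    have hdisj : Disjoint (seq n).1 (D (seq n).1 (seq n).2) :=
      Set.disjoint_of_subset_right (hDs _ _) Set.disjoint_sdiff_right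
    rw [hseq_succ, measure_union hdisj (hDm _ _)]
    exact add_le_add_right h3 _
  have hlin : ∀ n : ℕ, (n : ℝ≥0∞) * (μ D₀ / 2) ≤ μ (seq n).1 := by
    intro n
    induction n with
    | zero => simp
    | succ n ih =>
      push_cast
      rw [add_mul, one_mul]
      exact (add_le_add_left ih _).trans (hstep_ge n)
  have hhalfpos : μ D₀ / 2 ≠ 0 := by
    simp [ENNReal.div_eq_zero_iff, hD₀pos.ne']
  have hhalft : μ D₀ / 2 ≠ ∞ := by
    simp [ENNReal.div_eq_top, measure_ne_top μ D₀]
  obtain ⟨n, hn⟩ := ENNReal.exists_nat_gt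
    ((by simp [ENNReal.div_eq_top, hhalfpos, ne_top_of_le_ne_top (measure_ne_top μ A) hc]
      : c / (μ D₀ / 2) ≠ ∞))
  have : c < (n : ℝ≥0∞) * (μ D₀ / 2) := by
    rwa [ENNReal.div_lt_iff (Or.inl hhalfpos) (Or.inl hhalft)] at hn
  exact absurd ((hlin n).trans ((measure_mono (le_iSup (fun n => (seq n).1) n)).trans hBinfc))
    this.not_ge

open ENNReal in
lemma exists_fraction_set {T : Type*} [MeasurableSpace T] {μ : Measure T} [IsFiniteMeasure μ]
    (hμ : MeasureAtomless μ)
    {Z : Type*} [NormedAddCommGroup Z] [NormedSpace ℝ Z] [CompleteSpace Z]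
    {G : T → Z} (hG : Integrable G μ) {S : Set T} (hS : MeasurableSet S)
    {r : ℝ} (hr0 : 0 ≤ r) (hr1 : r ≤ 1) {ε : ℝ} (hε : 0 < ε) :
    ∃ E, MeasurableSet E ∧ E ⊆ S ∧ μ E = ENNReal.ofReal r * μ S ∧
      ‖(∫ t in E, G t ∂μ) - r • ∫ t in S, G t ∂μ‖ ≤ 2 * ε := by
  classical
  obtain ⟨g, hgclose, hgmem⟩ := (memLp_one_iff_integrable.mpr hG).exists_simpleFunc_eLpNorm_sub_lt
    ENNReal.one_ne_top (ENNReal.ofReal_pos.mpr hε).ne'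
  have hgi : Integrable (⇑g) μ := memLp_one_iff_integrable.mp hgmem
  have hGg : Integrable (fun t => G t - g t) μ := hG.sub hgi
  have hL1 : ∫ t, ‖G t - g t‖ ∂μ ≤ ε := by
    have h1 : ENNReal.ofReal (∫ t, ‖G t - g t‖ ∂μ) = eLpNorm (G - ⇑g) 1 μ := by
      rw [ofReal_integral_norm_eq_lintegral_enorm hGg, eLpNorm_one_eq_lintegral_enorm]
      rfl
    have h2 : ENNReal.ofReal (∫ t, ‖G t - g t‖ ∂μ) ≤ ENNReal.ofReal ε :=
      h1.le.trans hgclose.le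
    have h3 := ENNReal.toReal_mono ENNReal.ofReal_ne_top h2
    rwa [ENNReal.toReal_ofReal (integral_nonneg fun t => norm_nonneg _),
      ENNReal.toReal_ofReal hε.le] at h3
  set A : Z → Set T := fun v => S ∩ ⇑g ⁻¹' {v} with hA
  have hAm : ∀ v, MeasurableSet (A v) := fun v => hS.inter (g.measurableSet_fiber v)
  have hAc : ∀ v, ENNReal.ofReal r * μ (A v) ≤ μ (A v) := fun v =>
    mul_le_of_le_one_left (by positivity) (ENNReal.ofReal_le_one.mpr hr1)
  choose B hBsub hBm hBμ using fun v : Z => atomless_sierpinski hμ (hAm v) (hAc v)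
  set V : Finset Z := g.range with hV
  set E : Set T := ⋃ v ∈ V, B v with hE
  have hEm : MeasurableSet E := V.measurableSet_biUnion fun v _ => hBm v
  have hES : E ⊆ S := Set.iUnion₂_subset fun v _ =>
    (hBsub v).trans (Set.inter_subset_left)
  have hAdisj : (V : Set Z).PairwiseDisjoint A := fun v _ w _ hvw =>
    Set.disjoint_left.mpr fun t htv htw => hvw (htv.2.symm.trans htw.2)
  have hBdisj : (V : Set Z).PairwiseDisjoint B := fun v hv w hw hvw =>
    Set.disjoint_of_subset (hBsub v) (hBsub w) (hAdisj hv hw hvw)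
  have hScover : S = ⋃ v ∈ V, A v := by
    ext t
    constructor
    · intro ht
      exact Set.mem_biUnion (g.mem_range_self t) ⟨ht, rfl⟩
    · intro ht
      obtain ⟨v, _, htv, _⟩ := Set.mem_iUnion₂.mp ht
      exact htv
  have hμS : μ S = ∑ v ∈ V, μ (A v) := by
    rw [hScover]
    exact measure_biUnion_finset hAdisj fun v _ => hAm v
  have hμE : μ E = ENNReal.ofReal r * μ S := by
    rw [hE, measure_biUnion_finset hBdisj fun v _ => hBm v, hμS, Finset.mul_sum]
    exact Finset.sum_congr rfl fun v _ => hBμ v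
  refine ⟨E, hEm, hES, hμE, ?_⟩
  -- integral of g over a fiber subset
  have hint_sub : ∀ (W : Set T) (v : Z), MeasurableSet W → W ⊆ ⇑g ⁻¹' {v} →
      ∫ t in W, g t ∂μ = (μ W).toReal • v := by
    intro W v hWm hWsub
    rw [setIntegral_congr_fun hWm (fun t ht => hWsub ht), setIntegral_const]
    rfl
  have hEg : ∫ t in E, g t ∂μ = r • ∫ t in S, g t ∂μ := by
    have h1 : ∫ t in E, g t ∂μ = ∑ v ∈ V, (μ (B v)).toReal • v := by
      rw [hE, integral_biUnion_finset V (fun v _ => hBm v) hBdisj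
        (fun v _ => hgi.integrableOn)]
      exact Finset.sum_congr rfl fun v _ => hint_sub (B v) v (hBm v)
        ((hBsub v).trans Set.inter_subset_right)
    have h2 : ∫ t in S, g t ∂μ = ∑ v ∈ V, (μ (A v)).toReal • v := by
      rw [hScover, integral_biUnion_finset V (fun v _ => hAm v) hAdisj
        (fun v _ => hgi.integrableOn)]
      exact Finset.sum_congr rfl fun v _ => hint_sub (A v) v (hAm v)
        Set.inter_subset_right
    rw [h1, h2, Finset.smul_sum]
    refine Finset.sum_congr rfl fun v _ => ?_
    rw [smul_smul, hBμ v, ENNReal.toReal_mul, ENNReal.toReal_ofReal hr0]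
  -- error decomposition
  have hdec : (∫ t in E, G t ∂μ) - r • ∫ t in S, G t ∂μ
      = (∫ t in E, (G t - g t) ∂μ) + r • ∫ t in S, (g t - G t) ∂μ := by
    rw [integral_sub hG.integrableOn hgi.integrableOn,
      integral_sub hgi.integrableOn hG.integrableOn, smul_sub, hEg]
    abel
  rw [hdec]
  have hb1 : ‖∫ t in E, (G t - g t) ∂μ‖ ≤ ε := by
    refine (norm_integral_le_integral_norm _).trans ?_
    refine le_trans ?_ hL1
    exact setIntegral_le_integral hGg.norm (Eventually.of_forall fun t => norm_nonneg _)
  have hb2 : ‖∫ t in S, (g t - G t) ∂μ‖ ≤ ε := by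
    refine (norm_integral_le_integral_norm _).trans ?_
    refine le_trans ?_ hL1
    have : ∀ t, ‖g t - G t‖ = ‖G t - g t‖ := fun t => norm_sub_rev _ _
    simp_rw [this]
    exact setIntegral_le_integral hGg.norm (Eventually.of_forall fun t => norm_nonneg _)
  calc ‖(∫ t in E, (G t - g t) ∂μ) + r • ∫ t in S, (g t - G t) ∂μ‖
      ≤ ‖∫ t in E, (G t - g t) ∂μ‖ + ‖r • ∫ t in S, (g t - G t) ∂μ‖ := norm_add_le _ _
    _ ≤ ε + r * ε := by
        refine add_le_add hb1 ?_
        rw [norm_smul, Real.norm_of_nonneg hr0]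
        exact mul_le_mul_of_nonneg_left hb2 hr0
    _ ≤ 2 * ε := by nlinarith

/-- Lyapunov-type approximation uniformly over finitely many states: a single sequence
`Eₙ ⊆ S` works for all `ω ∈ Ω` at once. -/
theorem exists_approx_fraction_sets_states {T : Type*} [MeasurableSpace T]
    (μ : Measure T) [IsFiniteMeasure μ] (hμ : MeasureAtomless μ)
    {Ω : Type*} [Fintype Ω]
    {Y : Type*} [NormedAddCommGroup Y] [NormedSpace ℝ Y] [CompleteSpace Y]
    (y f : T → Ω → Y)
    (hy : ∀ ω, Integrable (fun t => y t ω) μ) (hf : ∀ ω, Integrable (fun t => f t ω) μ)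
    {S : Set T} (hS : MeasurableSet S) (hSpos : 0 < μ S)
    {r : ℝ} (hr : r ∈ Set.Ioo (0 : ℝ) 1) :
    ∃ En : ℕ → Set T, (∀ n, MeasurableSet (En n) ∧ En n ⊆ S) ∧
      ∀ ω, Tendsto
        (fun n => (((μ (En n)).toReal : ℝ), ∫ t in En n, (y t ω - f t ω) ∂μ)) atTop
        (𝓝 (r * (μ S).toReal, r • ∫ t in S, (y t ω - f t ω) ∂μ)) := by
  classical
  set G : T → Ω → Y := fun t ω => y t ω - f t ω with hG
  have hcomp : ∀ ω, Integrable (fun t => y t ω - f t ω) μ := fun ω => (hy ω).sub (hf ω)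
  have hsingle : ∀ ω : Ω, Integrable (fun t => Pi.single (M := fun _ : Ω => Y) ω (y t ω - f t ω)) μ := by
    intro ω
    have hcont : Continuous (Pi.single (M := fun _ : Ω => Y) ω) := by
      refine continuous_pi fun ω' => ?_
      simp only [Pi.single_apply]
      split <;> [exact continuous_id; exact continuous_const]
    refine ⟨hcont.comp_aestronglyMeasurable (hcomp ω).1, ?_⟩
    have := (hcomp ω).2
    simpa [HasFiniteIntegral, Pi.enorm_single] using this
  have hGint : Integrable G μ := by
    have hGeq : G = fun t => ∑ ω, Pi.single ω (y t ω - f t ω) := by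
      funext t
      exact (Finset.univ_sum_single (G t)).symm
    rw [hGeq]
    exact integrable_finset_sum _ fun ω _ => hsingle ω
  have hε : ∀ n : ℕ, (0:ℝ) < 1 / (n + 1) := fun n => by positivity
  choose En hEm hEsub hEμ hEerr using fun n : ℕ =>
    exists_fraction_set hμ hGint hS hr.1.le hr.2.le (hε n)
  refine ⟨En, fun n => ⟨hEm n, hEsub n⟩, fun ω => ?_⟩
  have hconst : ∀ n, (μ (En n)).toReal = r * (μ S).toReal := fun n => by
    rw [hEμ n, ENNReal.toReal_mul, ENNReal.toReal_ofReal hr.1.le]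
  have hproj : ∀ W : Set T, ∫ t in W, (y t ω - f t ω) ∂μ = (∫ t in W, G t ∂μ) ω := by
    intro W
    have h := (ContinuousLinearMap.proj (R := ℝ) (φ := fun _ : Ω => Y) ω).integral_comp_comm
      (hGint.restrict (s := W))
    simp only [ContinuousLinearMap.proj_apply] at h
    exact h
  have hb : ∀ n, ‖(∫ t in En n, (y t ω - f t ω) ∂μ) - r • ∫ t in S, (y t ω - f t ω) ∂μ‖
      ≤ 2 * (1 / (n + 1)) := by
    intro n
    rw [hproj, hproj]
    have h1 : (∫ t in En n, G t ∂μ) ω - r • (∫ t in S, G t ∂μ) ω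
        = ((∫ t in En n, G t ∂μ) - r • ∫ t in S, G t ∂μ) ω := by simp
    rw [h1]
    exact (norm_le_pi_norm _ ω).trans (hEerr n)
  have h2 : Tendsto (fun n : ℕ => ∫ t in En n, (y t ω - f t ω) ∂μ) atTop
      (𝓝 (r • ∫ t in S, (y t ω - f t ω) ∂μ)) := by
    rw [tendsto_iff_norm_sub_tendsto_zero]
    refine squeeze_zero (fun n => norm_nonneg _) hb ?_
    have := tendsto_one_div_add_atTop_nhds_zero_nat.const_mul (2:ℝ)
    simpa using this
  have h1 : Tendsto (fun _ : ℕ => r * (μ S).toReal) atTop (𝓝 (r * (μ S).toReal)) :=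
    tendsto_const_nhds
  have := h1.prodMk_nhds h2
  refine this.congr fun n => ?_
  rw [hconst n]
end
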